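/- Suppose R : X → PMF(Y) is a replacement (ε_r, δ_r)-DP and deletion (ε, δ)-DP local randomizer with reference distribution ρ, t-samplable via R_∅ : {0,1}^t → Y. Suppose G : {0,1}^ℓ → {0,1}^t β-fools both the density tests of R and the difference tests of R, where β ≥ 0, δ ≥ 0 and δ + e^ε·β < 1/2. Then for all x, x' ∈ X, the truncated compressed randomizer R̃[G] satisfies Σ_{s ∈ {0,1}^ℓ} max(R̃[G](x)(s) − e^{ε_r + 2δ + 3·e^ε·β}·R̃[G](x')(s), 0) ≤ 2·(δ_r + e^ε·β); in particular R̃[G] is a replacement (ε_r + 2δ + 3·e^ε·β, 2δ_r + 2·e^ε·β)-DP local randomizer. -/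

import Mathlib

open Finset MeasureTheory


lemma aux_anti (c : ℝ) : Antitone (fun θ : ℝ => if θ ≤ c then (1:ℝ) else 0) := by
  intro a b hab
  by_cases hb : b ≤ c
  · simp [hb, hab.trans hb]
  · simp only [hb, if_false]
    split <;> norm_num

lemma aux_integ_if (c M : ℝ) (h0 : 0 ≤ c) (hc : c ≤ M) :
    (∫ θ in (0:ℝ)..M, (if θ ≤ c then (1:ℝ) else 0)) = c := by
  have h : (fun θ : ℝ => if θ ≤ c then (1:ℝ) else 0)
      = (Set.Iic c).indicator (fun _ => (1:ℝ)) := by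
    funext θ; simp [Set.indicator_apply]
  rw [h, intervalIntegral.integral_of_le (h0.trans hc),
    setIntegral_indicator measurableSet_Iic]
  have h2 : Set.Ioc (0:ℝ) M ∩ Set.Iic c = Set.Ioc 0 c := by
    ext θ
    simp only [Set.mem_inter_iff, Set.mem_Ioc, Set.mem_Iic]
    exact ⟨fun ⟨⟨a,_⟩,b⟩ => ⟨a,b⟩, fun ⟨a,b⟩ => ⟨⟨a, b.trans hc⟩, b⟩⟩
  rw [h2, setIntegral_const]
  simp [Real.volume_Ioc, ENNReal.toReal_ofReal h0, h0]

lemma sum_eq_integral {S : Type*} [Fintype S] (F : S → ℝ) (M : ℝ)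
    (hF : ∀ s, 0 ≤ F s ∧ F s ≤ M) :
    ∑ s, F s = ∫ θ in (0:ℝ)..M, ((univ.filter fun s => θ ≤ F s).card : ℝ) := by
  classical
  have h : ∀ θ : ℝ, ((univ.filter fun s => θ ≤ F s).card : ℝ)
      = ∑ s, (if θ ≤ F s then (1:ℝ) else 0) := fun θ => (Finset.sum_boole _ _).symm
  rw [intervalIntegral.integral_congr
    (g := fun θ => ∑ s, (if θ ≤ F s then (1:ℝ) else 0)) (fun θ _ => h θ)]
  rw [intervalIntegral.integral_finset_sum (fun s _ => (aux_anti (F s)).intervalIntegrable)]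
  exact (Finset.sum_congr rfl fun s _ => (aux_integ_if (F s) M (hF s).1 (hF s).2)).symm

lemma card_anti {S : Type*} [Fintype S] (F : S → ℝ) :
    Antitone (fun θ : ℝ => ((univ.filter fun s => θ ≤ F s).card : ℝ)) := by
  classical
  intro θ1 θ2 h12
  have hsub : (univ.filter fun s => θ2 ≤ F s) ⊆ (univ.filter fun s => θ1 ≤ F s) := by
    intro s hs
    simp only [Finset.mem_filter, Finset.mem_univ, true_and] at *
    exact le_trans h12 hs
  show ((univ.filter fun s => θ2 ≤ F s).card : ℝ) ≤ ((univ.filter fun s => θ1 ≤ F s).card : ℝ)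
  exact_mod_cast Finset.card_le_card hsub

lemma avg_close {S T : Type*} [Fintype S] [Fintype T]
    (F : S → ℝ) (H : T → ℝ) (M β a b : ℝ)
    (ha : 0 < a) (hb : 0 < b) (hM : 0 ≤ M)
    (hF : ∀ s, 0 ≤ F s ∧ F s ≤ M) (hH : ∀ r, 0 ≤ H r ∧ H r ≤ M)
    (hclose : ∀ θ ∈ Set.Ioc (0:ℝ) M,
      |((univ.filter fun s => θ ≤ F s).card : ℝ) / a -
        ((univ.filter fun r => θ ≤ H r).card : ℝ) / b| ≤ β) :
    |(∑ s, F s) / a - (∑ r, H r) / b| ≤ M * β := by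
  classical
  have hiF := (card_anti F).intervalIntegrable (μ := volume) (a := 0) (b := M)
  have hiH := (card_anti H).intervalIntegrable (μ := volume) (a := 0) (b := M)
  have key : (∑ s, F s) / a - (∑ r, H r) / b
      = ∫ θ in (0:ℝ)..M, (((univ.filter fun s => θ ≤ F s).card : ℝ) / a -
          ((univ.filter fun r => θ ≤ H r).card : ℝ) / b) := by
    rw [intervalIntegral.integral_sub (hiF.div_const a) (hiH.div_const b),
      intervalIntegral.integral_div, intervalIntegral.integral_div,
      ← sum_eq_integral F M hF, ← sum_eq_integral H M hH]
  rw [key]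
  have hbd := intervalIntegral.norm_integral_le_of_norm_le_const (a := (0:ℝ)) (b := M)
    (C := β)
    (f := fun θ => ((univ.filter fun s => θ ≤ F s).card : ℝ) / a -
      ((univ.filter fun r => θ ≤ H r).card : ℝ) / b)
    (by rw [Set.uIoc_of_le hM]; exact fun θ hθ => hclose θ hθ)
  rw [Real.norm_eq_abs] at hbd
  calc |∫ θ in (0:ℝ)..M, (((univ.filter fun s => θ ≤ F s).card : ℝ) / a -
          ((univ.filter fun r => θ ≤ H r).card : ℝ) / b)| ≤ β * |M - 0| := hbd
    _ = M * β := by rw [sub_zero, abs_of_nonneg hM]; ring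

lemma aux_minmax (a b m K : ℝ) (ha : 0 ≤ a) (hb : 0 ≤ b) (hm : 0 ≤ m) (hK : 1 ≤ K) :
    max (min a m - K * min b m) 0 ≤ max (a - K * b) 0 := by
  rcases le_total b m with h | h
  · rw [min_eq_left h]
    exact max_le_max (by nlinarith [min_le_left a m]) le_rfl
  · rw [min_eq_right h]
    have h1 : min a m - K * m ≤ 0 := by nlinarith [min_le_right a m]
    calc max (min a m - K * m) 0 = 0 := max_eq_right h1
      _ ≤ max (a - K * b) 0 := le_max_right _ _

lemma aux_exp (u v : ℝ) (hu0 : 0 ≤ u) (hv0 : 0 ≤ v) (hu : u < 1/2) :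
    1 + v ≤ Real.exp (2*u + v) * (1 - u) := by
  have h1 := Real.add_one_le_exp (2*u)
  have h2 := Real.add_one_le_exp v
  have h3 : Real.exp (2*u+v) = Real.exp (2*u) * Real.exp v := Real.exp_add _ _
  nlinarith [Real.exp_pos (2*u), Real.exp_pos v,
    mul_le_mul_of_nonneg_right (mul_le_mul h1 h2 (by linarith) (Real.exp_pos (2*u)).le)
      (by linarith : (0:ℝ) ≤ 1 - u),
    mul_nonneg (mul_nonneg (by linarith : (0:ℝ) ≤ 1 + v) hu0)
      (by linarith : (0:ℝ) ≤ 1 - 2*u)]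

lemma aux_ptwise (P Q Zx Zx' ec er : ℝ) (hQ : 0 ≤ Q) (hZx : 0 < Zx) (hZx' : 0 < Zx')
    (h : er * Zx' ≤ ec * Zx) :
    max (P / Zx - ec * (Q / Zx')) 0 ≤ max (P - er * Q) 0 / Zx := by
  have h2 : er * Q / Zx ≤ ec * Q / Zx' := by
    rw [div_le_div_iff₀ hZx hZx']
    nlinarith [mul_nonneg (sub_nonneg.mpr h) hQ]
  have hkey : P / Zx - ec * (Q / Zx') ≤ (P - er * Q) / Zx := by
    rw [sub_div]
    linarith [h2, mul_div_assoc er Q Zx, mul_div_assoc ec Q Zx']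
  apply max_le
  · calc P / Zx - ec * (Q / Zx') ≤ (P - er * Q) / Zx := hkey
      _ ≤ max (P - er * Q) 0 / Zx := by gcongr; exact le_max_left _ _
  · exact div_nonneg (le_max_right _ _) hZx.le

lemma sum_pushforward {Y : Type*} [Fintype Y] [DecidableEq Y] {t : ℕ}
    (R₀ : (Fin t → Bool) → Y) (ρ : Y → ℝ)
    (hsamp : ∀ y, ((univ.filter fun r : Fin t → Bool => R₀ r = y).card : ℝ) / 2 ^ t = ρ y)
    (h : Y → ℝ) :
    (∑ r, h (R₀ r)) / 2 ^ t = ∑ y, ρ y * h y := by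
  rw [← Finset.sum_fiberwise univ R₀ (fun r => h (R₀ r)), Finset.sum_div]
  refine Finset.sum_congr rfl fun y _ => ?_
  rw [← hsamp y]
  have hc : ∑ r ∈ univ.filter (fun r => R₀ r = y), h (R₀ r)
      = ((univ.filter fun r : Fin t → Bool => R₀ r = y).card : ℝ) * h y := by
    rw [Finset.sum_congr rfl (fun r hr => by rw [(Finset.mem_filter.mp hr).2]),
      Finset.sum_const, nsmul_eq_mul]
  rw [hc]; ring

noncomputable def pt {X Y : Type*} (R : X → Y → ℝ) (ρ : Y → ℝ) (ε : ℝ) (z : X) (y : Y) : ℝ :=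
  min (R z y) (Real.exp ε * ρ y) / ρ y


/-- **The truncated compressed randomizer of a replacement (ε_r, δ_r)-DP and deletion
(ε, δ)-DP randomizer is replacement (ε_r + 2δ + 3e^ε β, 2δ_r + 2e^ε β)-DP**, provided `G`
β-fools both the density tests and the difference tests of `R`. Here
`π̃_x(y) = min(R(x)(y), e^ε ρ(y))/ρ(y)` and
`R̃[G](x)(s) = π̃_x(R₀(G s)) / ∑_{s'} π̃_x(R₀(G s'))`. -/
theorem stmt_10 {X Y : Type*} [Fintype X] [Fintype Y] [Nonempty X] [Nonempty Y] [DecidableEq Y]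
    (R : X → Y → ℝ) (ρ : Y → ℝ) (ε δ εr δr β : ℝ) (t ℓ : ℕ)
    (R₀ : (Fin t → Bool) → Y) (G : (Fin ℓ → Bool) → Fin t → Bool)
    (hRpmf : ∀ x, (∀ y, 0 ≤ R x y) ∧ ∑ y, R x y = 1)
    (hρpmf : (∀ y, 0 ≤ ρ y) ∧ ∑ y, ρ y = 1)
    (hε : 0 ≤ ε) (hεr : 0 ≤ εr) (hδ : 0 ≤ δ) (hδr : 0 ≤ δr) (hβ0 : 0 ≤ β)
    (hsmall : δ + Real.exp ε * β < 1 / 2)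
    (hDP : ∀ x, (∑ y, max (R x y - Real.exp ε * ρ y) 0 ≤ δ) ∧
      (∑ y, max (ρ y - Real.exp ε * R x y) 0 ≤ δ))
    (hDPr : ∀ x x' : X, ∑ y, max (R x y - Real.exp εr * R x' y) 0 ≤ δr)
    (hsamp : ∀ y, ((univ.filter fun r : Fin t → Bool => R₀ r = y).card : ℝ) / 2 ^ t = ρ y)
    (hfool : ∀ x : X, ∀ θ ∈ Set.Icc (0 : ℝ) (Real.exp ε),
      |((univ.filter fun s : Fin ℓ → Bool =>
            θ ≤ R x (R₀ (G s)) / ρ (R₀ (G s))).card : ℝ) / 2 ^ ℓ -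
        ((univ.filter fun r : Fin t → Bool =>
            θ ≤ R x (R₀ r) / ρ (R₀ r)).card : ℝ) / 2 ^ t| ≤ β)
    (hfooldiff : ∀ x x' : X, ∀ θ ∈ Set.Icc (0 : ℝ) (Real.exp ε),
      |((univ.filter fun s : Fin ℓ → Bool =>
            θ ≤ min (R x (R₀ (G s))) (Real.exp ε * ρ (R₀ (G s))) / ρ (R₀ (G s)) -
              Real.exp εr *
                (min (R x' (R₀ (G s))) (Real.exp ε * ρ (R₀ (G s))) / ρ (R₀ (G s)))).card : ℝ) /
          2 ^ ℓ -
        ((univ.filter fun r : Fin t → Bool =>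
            θ ≤ min (R x (R₀ r)) (Real.exp ε * ρ (R₀ r)) / ρ (R₀ r) -
              Real.exp εr *
                (min (R x' (R₀ r)) (Real.exp ε * ρ (R₀ r)) / ρ (R₀ r))).card : ℝ) / 2 ^ t| ≤ β) :
    ∀ x x' : X,
      ∑ s : Fin ℓ → Bool,
        max ((min (R x (R₀ (G s))) (Real.exp ε * ρ (R₀ (G s))) / ρ (R₀ (G s))) /
            (∑ s' : Fin ℓ → Bool,
              min (R x (R₀ (G s'))) (Real.exp ε * ρ (R₀ (G s'))) / ρ (R₀ (G s'))) -
          Real.exp (εr + 2 * δ + 3 * Real.exp ε * β) *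
            ((min (R x' (R₀ (G s))) (Real.exp ε * ρ (R₀ (G s))) / ρ (R₀ (G s))) /
              (∑ s' : Fin ℓ → Bool,
                min (R x' (R₀ (G s'))) (Real.exp ε * ρ (R₀ (G s'))) / ρ (R₀ (G s'))))) 0 ≤
        2 * (δr + Real.exp ε * β) := by
  intro x x'
  classical
  have hEpos : (0:ℝ) < Real.exp ε := Real.exp_pos ε
  have h2l : (0:ℝ) < 2 ^ ℓ := by positivity
  have h2t : (0:ℝ) < 2 ^ t := by positivity
  have hpt0 : ∀ z y, 0 ≤ pt R ρ ε z y := fun z y =>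
    div_nonneg (le_min ((hRpmf z).1 y) (mul_nonneg hEpos.le (hρpmf.1 y))) (hρpmf.1 y)
  have hptM : ∀ z y, pt R ρ ε z y ≤ Real.exp ε := by
    intro z y
    by_cases hy : ρ y = 0
    · simp only [pt, hy, div_zero]
      exact hEpos.le
    · have hy' : 0 < ρ y := lt_of_le_of_ne (hρpmf.1 y) (Ne.symm hy)
      rw [pt, div_le_iff₀ hy']
      exact min_le_right _ _
  have hρpt : ∀ z y, ρ y * pt R ρ ε z y = min (R z y) (Real.exp ε * ρ y) := by
    intro z y
    by_cases hy : ρ y = 0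
    · rw [pt, hy]
      simp only [mul_zero, div_zero, zero_mul]
      exact (min_eq_right ((hRpmf z).1 y)).symm
    · rw [pt, mul_comm, div_mul_cancel₀ _ hy]
  have hiff : ∀ (z : X) (θ : ℝ), θ ≤ Real.exp ε → ∀ y,
      ((θ ≤ pt R ρ ε z y) ↔ (θ ≤ R z y / ρ y)) := by
    intro z θ hθ y
    by_cases hy : ρ y = 0
    · rw [pt, hy, div_zero, div_zero]
    · have hy' : 0 < ρ y := lt_of_le_of_ne (hρpmf.1 y) (Ne.symm hy)
      rw [pt, ← min_div_div_right hy'.le, mul_div_assoc, div_self hy, mul_one, le_min_iff]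
      exact ⟨fun h => h.1, fun h => ⟨h, hθ⟩⟩
  have hBpush : ∀ z : X, (∑ r, pt R ρ ε z (R₀ r)) / 2 ^ t
      = ∑ y, min (R z y) (Real.exp ε * ρ y) := by
    intro z
    rw [sum_pushforward R₀ ρ hsamp (pt R ρ ε z)]
    exact Finset.sum_congr rfl fun y _ => hρpt z y
  have hBlow : ∀ z : X, 1 - δ ≤ ∑ y, min (R z y) (Real.exp ε * ρ y) := by
    intro z
    have hmin : ∀ y, min (R z y) (Real.exp ε * ρ y)
        = R z y - max (R z y - Real.exp ε * ρ y) 0 := by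
      intro y
      rcases le_total (R z y) (Real.exp ε * ρ y) with h | h
      · rw [min_eq_left h, max_eq_right (by linarith)]; ring
      · rw [min_eq_right h, max_eq_left (by linarith)]; ring
    rw [Finset.sum_congr rfl fun y _ => hmin y, Finset.sum_sub_distrib, (hRpmf z).2]
    linarith [(hDP z).1]
  have hBhigh : ∀ z : X, ∑ y, min (R z y) (Real.exp ε * ρ y) ≤ 1 := by
    intro z
    rw [← (hRpmf z).2]
    exact Finset.sum_le_sum fun y _ => min_le_left _ _
  have hAclose : ∀ z : X,
      |(∑ s, pt R ρ ε z (R₀ (G s))) / 2 ^ ℓ - (∑ r, pt R ρ ε z (R₀ r)) / 2 ^ t|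
        ≤ Real.exp ε * β := by
    intro z
    apply avg_close _ _ (Real.exp ε) β _ _ h2l h2t hEpos.le
      (fun s => ⟨hpt0 z _, hptM z _⟩) (fun r => ⟨hpt0 z _, hptM z _⟩)
    intro θ hθ
    have e1 : (univ.filter fun s : Fin ℓ → Bool => θ ≤ pt R ρ ε z (R₀ (G s)))
        = (univ.filter fun s : Fin ℓ → Bool => θ ≤ R z (R₀ (G s)) / ρ (R₀ (G s))) :=
      Finset.filter_congr fun s _ => hiff z θ hθ.2 (R₀ (G s))
    have e2 : (univ.filter fun r : Fin t → Bool => θ ≤ pt R ρ ε z (R₀ r))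
        = (univ.filter fun r : Fin t → Bool => θ ≤ R z (R₀ r) / ρ (R₀ r)) :=
      Finset.filter_congr fun r _ => hiff z θ hθ.2 (R₀ r)
    rw [e1, e2]
    exact hfool z θ ⟨hθ.1.le, hθ.2⟩
  have hAlow : ∀ z : X, 1 - (δ + Real.exp ε * β)
      ≤ (∑ s, pt R ρ ε z (R₀ (G s))) / 2 ^ ℓ := by
    intro z
    have h := abs_le.mp (hAclose z)
    rw [hBpush z] at h
    linarith [h.1, hBlow z]
  have hAhigh : ∀ z : X, (∑ s, pt R ρ ε z (R₀ (G s))) / 2 ^ ℓ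
      ≤ 1 + Real.exp ε * β := by
    intro z
    have h := abs_le.mp (hAclose z)
    rw [hBpush z] at h
    linarith [h.2, hBhigh z]
  have hDclose :
      |(∑ s, max (pt R ρ ε x (R₀ (G s)) - Real.exp εr * pt R ρ ε x' (R₀ (G s))) 0) / 2 ^ ℓ -
       (∑ r, max (pt R ρ ε x (R₀ r) - Real.exp εr * pt R ρ ε x' (R₀ r)) 0) / 2 ^ t|
        ≤ Real.exp ε * β := by
    apply avg_close _ _ (Real.exp ε) β _ _ h2l h2t hEpos.le
      (fun s => ⟨le_max_right _ _,
        max_le (le_trans (sub_le_self _ (mul_nonneg (Real.exp_pos εr).le (hpt0 x' _)))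
          (hptM x _)) hEpos.le⟩)
      (fun r => ⟨le_max_right _ _,
        max_le (le_trans (sub_le_self _ (mul_nonneg (Real.exp_pos εr).le (hpt0 x' _)))
          (hptM x _)) hEpos.le⟩)
    intro θ hθ
    have key : ∀ g : ℝ, (θ ≤ max g 0) ↔ (θ ≤ g) := by
      intro g
      rw [le_max_iff]
      exact ⟨fun h => h.resolve_right fun h0 => absurd h0 (not_le.mpr hθ.1), Or.inl⟩
    have e1 : (univ.filter fun s : Fin ℓ → Bool =>
          θ ≤ max (pt R ρ ε x (R₀ (G s)) - Real.exp εr * pt R ρ ε x' (R₀ (G s))) 0)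
        = (univ.filter fun s : Fin ℓ → Bool =>
          θ ≤ pt R ρ ε x (R₀ (G s)) - Real.exp εr * pt R ρ ε x' (R₀ (G s))) :=
      Finset.filter_congr fun s _ => key _
    have e2 : (univ.filter fun r : Fin t → Bool =>
          θ ≤ max (pt R ρ ε x (R₀ r) - Real.exp εr * pt R ρ ε x' (R₀ r)) 0)
        = (univ.filter fun r : Fin t → Bool =>
          θ ≤ pt R ρ ε x (R₀ r) - Real.exp εr * pt R ρ ε x' (R₀ r)) :=
      Finset.filter_congr fun r _ => key _
    rw [e1, e2]
    exact hfooldiff x x' θ ⟨hθ.1.le, hθ.2⟩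
  have hsumr : (∑ r, max (pt R ρ ε x (R₀ r) - Real.exp εr * pt R ρ ε x' (R₀ r)) 0) / 2 ^ t
      ≤ δr := by
    have hpushD := sum_pushforward R₀ ρ hsamp
      (fun y => max (pt R ρ ε x y - Real.exp εr * pt R ρ ε x' y) 0)
    rw [hpushD]
    calc ∑ y, ρ y * max (pt R ρ ε x y - Real.exp εr * pt R ρ ε x' y) 0
        ≤ ∑ y, max (R x y - Real.exp εr * R x' y) 0 := by
          apply Finset.sum_le_sum
          intro y _
          rw [mul_max_of_nonneg _ _ (hρpmf.1 y), mul_zero]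
          have e3 : ρ y * (pt R ρ ε x y - Real.exp εr * pt R ρ ε x' y)
              = ρ y * pt R ρ ε x y - Real.exp εr * (ρ y * pt R ρ ε x' y) := by ring
          rw [e3, hρpt x y, hρpt x' y]
          exact aux_minmax _ _ _ _ ((hRpmf x).1 y) ((hRpmf x').1 y)
            (mul_nonneg hEpos.le (hρpmf.1 y)) (Real.one_le_exp hεr)
      _ ≤ δr := hDPr x x'
  have hsums : (∑ s, max (pt R ρ ε x (R₀ (G s)) - Real.exp εr * pt R ρ ε x' (R₀ (G s))) 0)
      ≤ (δr + Real.exp ε * β) * 2 ^ ℓ := by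
    have h := (abs_le.mp hDclose).2
    rw [← div_le_iff₀ h2l]
    linarith [hsumr]
  show ∑ s : Fin ℓ → Bool,
      max (pt R ρ ε x (R₀ (G s)) / (∑ s' : Fin ℓ → Bool, pt R ρ ε x (R₀ (G s'))) -
        Real.exp (εr + 2 * δ + 3 * Real.exp ε * β) *
          (pt R ρ ε x' (R₀ (G s)) / (∑ s' : Fin ℓ → Bool, pt R ρ ε x' (R₀ (G s'))))) 0 ≤
      2 * (δr + Real.exp ε * β)
  set Sx := ∑ s : Fin ℓ → Bool, pt R ρ ε x (R₀ (G s)) with hSxdef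
  set Sx' := ∑ s : Fin ℓ → Bool, pt R ρ ε x' (R₀ (G s)) with hSx'def
  have hSxge : (1 - (δ + Real.exp ε * β)) * 2 ^ ℓ ≤ Sx := (le_div_iff₀ h2l).mp (hAlow x)
  have hSx'ge : (1 - (δ + Real.exp ε * β)) * 2 ^ ℓ ≤ Sx' := (le_div_iff₀ h2l).mp (hAlow x')
  have hSx'le : Sx' ≤ (1 + Real.exp ε * β) * 2 ^ ℓ := (div_le_iff₀ h2l).mp (hAhigh x')
  have hSxpos : 0 < Sx :=
    lt_of_lt_of_le (by nlinarith) hSxge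
  have hSx'pos : 0 < Sx' :=
    lt_of_lt_of_le (by nlinarith) hSx'ge
  have hcomp : Real.exp εr * Sx' ≤ Real.exp (εr + 2 * δ + 3 * Real.exp ε * β) * Sx := by
    have hc : Real.exp (εr + 2 * δ + 3 * Real.exp ε * β)
        = Real.exp εr * Real.exp (2 * (δ + Real.exp ε * β) + Real.exp ε * β) := by
      rw [← Real.exp_add]; ring_nf
    have hex := aux_exp (δ + Real.exp ε * β) (Real.exp ε * β)
      (by positivity) (by positivity) hsmall
    rw [hc, mul_assoc]
    apply mul_le_mul_of_nonneg_left _ (Real.exp_pos εr).le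
    calc Sx' ≤ (1 + Real.exp ε * β) * 2 ^ ℓ := hSx'le
      _ ≤ (Real.exp (2 * (δ + Real.exp ε * β) + Real.exp ε * β)
            * (1 - (δ + Real.exp ε * β))) * 2 ^ ℓ :=
          mul_le_mul_of_nonneg_right hex h2l.le
      _ = Real.exp (2 * (δ + Real.exp ε * β) + Real.exp ε * β)
            * ((1 - (δ + Real.exp ε * β)) * 2 ^ ℓ) := by ring
      _ ≤ Real.exp (2 * (δ + Real.exp ε * β) + Real.exp ε * β) * Sx :=
          mul_le_mul_of_nonneg_left hSxge (Real.exp_pos _).le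
  calc ∑ s : Fin ℓ → Bool,
      max (pt R ρ ε x (R₀ (G s)) / Sx -
        Real.exp (εr + 2 * δ + 3 * Real.exp ε * β) * (pt R ρ ε x' (R₀ (G s)) / Sx')) 0
      ≤ ∑ s : Fin ℓ → Bool,
        max (pt R ρ ε x (R₀ (G s)) - Real.exp εr * pt R ρ ε x' (R₀ (G s))) 0 / Sx :=
        Finset.sum_le_sum fun s _ =>
          aux_ptwise _ _ _ _ _ _ (hpt0 x' _) hSxpos hSx'pos hcomp
    _ = (∑ s : Fin ℓ → Bool,
        max (pt R ρ ε x (R₀ (G s)) - Real.exp εr * pt R ρ ε x' (R₀ (G s))) 0) / Sx := by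
        rw [← Finset.sum_div]
    _ ≤ 2 * (δr + Real.exp ε * β) := by
        rw [div_le_iff₀ hSxpos]
        nlinarith [hsums, hSxge,
          mul_le_mul_of_nonneg_left hSxge
            (by positivity : (0:ℝ) ≤ 2 * (δr + Real.exp ε * β)),
          mul_nonneg (mul_nonneg (by positivity : (0:ℝ) ≤ δr + Real.exp ε * β) h2l.le)
            (by linarith : (0:ℝ) ≤ 1 - 2 * (δ + Real.exp ε * β))]
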